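/- Let d ≥ 2 be an integer, let H ∈ (0,1) satisfy 1/d < H < 3/(2d), and let T > 0. Then lim_{ε→0⁺} ε^{d/2 − 1/(2H)} ∫_0^T (T − s)(ε + s^{2H})^{−d/2} ds = T ∫_0^∞ (1 + z^{2H})^{−d/2} dz, and the integral on the right-hand side is finite. -/

import Mathlib

open MeasureTheory Real Set Filter Topology

/-- For `d ≥ 2` and `1/d < H < 3/(2d)`,
`lim_{ε→0⁺} ε^{d/2−1/(2H)} ∫_0^T (T−s)(ε+s^{2H})^{−d/2} ds = T ∫_0^∞ (1+z^{2H})^{−d/2} dz`,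
and the limit integral is finite (the integrand is integrable on `(0,∞)`). -/
theorem expectation_asymptotics {d : ℕ} (hd : 2 ≤ d) {H : ℝ}
    (hH0 : 0 < H) (hH1 : H < 1) (hHd1 : 1 / (d:ℝ) < H) (hHd2 : H < 3 / (2*(d:ℝ)))
    {T : ℝ} (hT : 0 < T) :
    Tendsto (fun ε : ℝ =>
        ε ^ ((d:ℝ)/2 - 1/(2*H)) *
          ∫ s in Ioc (0:ℝ) T, (T - s) * (ε + s^(2*H)) ^ (-(d:ℝ)/2))
      (𝓝[>] (0:ℝ))
      (𝓝 (T * ∫ z in Ioi (0:ℝ), (1 + z^(2*H)) ^ (-(d:ℝ)/2))) ∧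
    IntegrableOn (fun z : ℝ => (1 + z^(2*H)) ^ (-(d:ℝ)/2)) (Ioi 0) := by
  have hd0 : (0:ℝ) < d := by positivity
  have hdH : 1 < (d:ℝ) * H := by
    rw [div_lt_iff₀ hd0] at hHd1; linarith
  set f : ℝ → ℝ := fun z => (1 + z^(2*H)) ^ (-(d:ℝ)/2) with hfdef
  have hmeas : Measurable f := by measurability
  -- Integrability of the limit integrand
  have hf_int : IntegrableOn f (Ioi 0) := by
    have h1 : IntegrableOn f (Ioc 0 1) := by
      have hone : IntegrableOn (fun _ : ℝ => (1:ℝ)) (Ioc 0 1) :=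
        (integrableOn_const_iff).mpr (Or.inr measure_Ioc_lt_top)
      refine Integrable.mono' hone hmeas.aestronglyMeasurable ?_
      refine (ae_restrict_iff' measurableSet_Ioc).mpr (Filter.Eventually.of_forall fun z hz => ?_)
      rw [Real.norm_eq_abs,
        abs_of_nonneg (rpow_nonneg (by nlinarith [rpow_nonneg hz.1.le (2*H)]) _)]
      exact Real.rpow_le_one_of_one_le_of_nonpos
        (by nlinarith [rpow_nonneg hz.1.le (2*H)])
        (by rw [neg_div]; exact neg_nonpos.mpr (by positivity))
    have h2 : IntegrableOn f (Ioi 1) := by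
      have hint : IntegrableOn (fun z : ℝ => z ^ (-((d:ℝ)*H))) (Ioi 1) :=
        integrableOn_Ioi_rpow_of_lt (by linarith) one_pos
      refine Integrable.mono' hint hmeas.aestronglyMeasurable ?_
      refine (ae_restrict_iff' measurableSet_Ioi).mpr (Filter.Eventually.of_forall fun z hz => ?_)
      have hz0 : (0:ℝ) < z := lt_trans one_pos hz
      rw [Real.norm_eq_abs,
        abs_of_nonneg (rpow_nonneg (by nlinarith [rpow_nonneg hz0.le (2*H)]) _)]
      calc (1 + z^(2*H)) ^ (-(d:ℝ)/2) ≤ (z^(2*H)) ^ (-(d:ℝ)/2) := by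
            refine rpow_le_rpow_of_nonpos (by positivity) (by nlinarith)
              (by rw [neg_div]; exact neg_nonpos.mpr (by positivity))
        _ = z ^ (-((d:ℝ)*H)) := by
            rw [← Real.rpow_mul hz0.le]; ring_nf
    have hU : Ioc (0:ℝ) 1 ∪ Ioi 1 = Ioi 0 := Ioc_union_Ioi_eq_Ioi zero_le_one
    rw [← hU]
    exact h1.union h2
  refine ⟨?_, hf_int⟩
  have hfnn : ∀ z : ℝ, 0 < z → 0 ≤ f z := fun z hz =>
    rpow_nonneg (by nlinarith [rpow_nonneg hz.le (2*H)]) _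
  have h2H : (0:ℝ) < 2*H := by linarith
  -- the indicator family
  set Φ : ℝ → ℝ → ℝ := fun ε z =>
    (Ioc (0:ℝ) (T / ε ^ (1/(2*H)))).indicator (fun z => (T - ε ^ (1/(2*H)) * z) * f z) z
    with hΦdef
  -- key change of variables
  have key : ∀ ε : ℝ, 0 < ε →
      ε ^ ((d:ℝ)/2 - 1/(2*H)) * ∫ s in Ioc (0:ℝ) T, (T - s) * (ε + s^(2*H)) ^ (-(d:ℝ)/2)
        = ∫ z in Ioi (0:ℝ), Φ ε z := by
    intro ε hε
    have hc : 0 < ε ^ (1/(2*H)) := rpow_pos_of_pos hε _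
    set c : ℝ := ε ^ (1/(2*H)) with hcdef
    have hbc : 0 < T / c := div_pos hT hc
    have hceps : c ^ (2*H) = ε := by
      rw [hcdef, ← Real.rpow_mul hε.le, one_div_mul_cancel h2H.ne', Real.rpow_one]
    have hstep1 : ∫ z in Ioi (0:ℝ), Φ ε z
        = ∫ z in Ioc (0:ℝ) (T / c), (T - c * z) * f z := by
      rw [hΦdef]
      rw [setIntegral_indicator measurableSet_Ioc,
        Set.inter_eq_right.mpr Ioc_subset_Ioi_self]
    have hstep2 : ∫ z in Ioc (0:ℝ) (T/c), (T - c*z) * (ε + (c*z)^(2*H)) ^ (-(d:ℝ)/2)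
        = ε ^ (-(d:ℝ)/2) * ∫ z in Ioc (0:ℝ) (T/c), (T - c*z) * f z := by
      rw [← MeasureTheory.integral_const_mul]
      refine setIntegral_congr_fun measurableSet_Ioc fun z hz => ?_
      have hz0 : (0:ℝ) < z := hz.1
      rw [Real.mul_rpow hc.le hz0.le, hceps,
        show ε + ε * z^(2*H) = ε * (1 + z^(2*H)) by ring,
        Real.mul_rpow hε.le (by nlinarith [rpow_nonneg hz0.le (2*H)])]
      ring
    have hsub : ∫ s in Ioc (0:ℝ) T, (T - s) * (ε + s^(2*H)) ^ (-(d:ℝ)/2)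
        = c * ∫ z in Ioc (0:ℝ) (T/c), (T - c*z) * (ε + (c*z)^(2*H)) ^ (-(d:ℝ)/2) := by
      rw [← intervalIntegral.integral_of_le hT.le, ← intervalIntegral.integral_of_le hbc.le]
      rw [intervalIntegral.integral_comp_mul_left
        (fun s => (T - s) * (ε + s^(2*H)) ^ (-(d:ℝ)/2)) hc.ne']
      rw [mul_zero, mul_div_cancel₀ _ hc.ne', smul_eq_mul, ← mul_assoc,
        mul_inv_cancel₀ hc.ne', one_mul]
    have hcoef : ε ^ ((d:ℝ)/2 - 1/(2*H)) * (c * ε ^ (-(d:ℝ)/2)) = 1 := by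
      rw [hcdef, ← Real.rpow_add hε, ← Real.rpow_add hε,
        show (d:ℝ)/2 - 1/(2*H) + (1/(2*H) + -(d:ℝ)/2) = 0 by ring, Real.rpow_zero]
    calc ε ^ ((d:ℝ)/2 - 1/(2*H)) * ∫ s in Ioc (0:ℝ) T, (T - s) * (ε + s^(2*H)) ^ (-(d:ℝ)/2)
        = ε ^ ((d:ℝ)/2 - 1/(2*H)) *
            (c * (ε ^ (-(d:ℝ)/2) * ∫ z in Ioc (0:ℝ) (T/c), (T - c*z) * f z)) := by
          rw [hsub, hstep2]
      _ = (ε ^ ((d:ℝ)/2 - 1/(2*H)) * (c * ε ^ (-(d:ℝ)/2))) *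
            ∫ z in Ioc (0:ℝ) (T/c), (T - c*z) * f z := by ring
      _ = ∫ z in Ioc (0:ℝ) (T/c), (T - c*z) * f z := by rw [hcoef, one_mul]
      _ = ∫ z in Ioi (0:ℝ), Φ ε z := hstep1.symm
  -- dominated convergence
  have hctend : Tendsto (fun ε : ℝ => ε ^ (1/(2*H))) (𝓝[>] (0:ℝ)) (𝓝 0) := by
    have hcont := (Real.continuousAt_rpow_const 0 (1/(2*H)) (Or.inr (by positivity))).tendsto
    have h0 : (0:ℝ) ^ (1/(2*H)) = 0 := Real.zero_rpow (by positivity)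
    rw [h0] at hcont
    exact hcont.mono_left nhdsWithin_le_nhds
  have main : Tendsto (fun ε => ∫ z in Ioi (0:ℝ), Φ ε z) (𝓝[>] (0:ℝ))
      (𝓝 (∫ z in Ioi (0:ℝ), T * f z)) := by
    refine tendsto_integral_filter_of_dominated_convergence (fun z => T * f z)
      (Filter.Eventually.of_forall fun ε => ?_) ?_ (hf_int.const_mul T) ?_
    · exact (((measurable_const.sub (measurable_id.const_mul _)).mul hmeas).indicator
        measurableSet_Ioc).aestronglyMeasurable
    · filter_upwards [self_mem_nhdsWithin] with ε (hε : 0 < ε)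
      have hc : 0 < ε ^ (1/(2*H)) := rpow_pos_of_pos hε _
      refine (ae_restrict_iff' measurableSet_Ioi).mpr (Filter.Eventually.of_forall fun z hz => ?_)
      have hz0 : (0:ℝ) < z := hz
      by_cases hmem : z ∈ Ioc (0:ℝ) (T / ε ^ (1/(2*H)))
      · rw [hΦdef]
        simp only [Set.indicator_of_mem hmem]
        have hczT : ε ^ (1/(2*H)) * z ≤ T := by
          have := (le_div_iff₀ hc).mp hmem.2
          linarith
        have hcz0 : 0 < ε ^ (1/(2*H)) * z := by positivity
        rw [Real.norm_eq_abs, abs_of_nonneg (mul_nonneg (by linarith) (hfnn z hz0))]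
        exact mul_le_mul_of_nonneg_right (by linarith) (hfnn z hz0)
      · rw [hΦdef]
        simp only [Set.indicator_of_notMem hmem]
        simpa using mul_nonneg hT.le (hfnn z hz0)
    · refine (ae_restrict_iff' measurableSet_Ioi).mpr (Filter.Eventually.of_forall fun z hz => ?_)
      have hz0 : (0:ℝ) < z := hz
      have hlim : Tendsto (fun ε : ℝ => (T - ε ^ (1/(2*H)) * z) * f z) (𝓝[>] (0:ℝ))
          (𝓝 (T * f z)) := by
        have := (((tendsto_const_nhds : Tendsto (fun _ : ℝ => T) (𝓝[>] (0:ℝ)) (𝓝 T)).sub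
          (hctend.mul_const z)).mul
          (tendsto_const_nhds : Tendsto (fun _ : ℝ => f z) (𝓝[>] (0:ℝ)) (𝓝 (f z))))
        simpa using this
      refine hlim.congr' ?_
      filter_upwards [self_mem_nhdsWithin,
        hctend.eventually (gt_mem_nhds (div_pos hT hz0))] with ε (hε : 0 < ε) hlt
      have hc : 0 < ε ^ (1/(2*H)) := rpow_pos_of_pos hε _
      have hmem : z ∈ Ioc (0:ℝ) (T / ε ^ (1/(2*H))) := by
        refine ⟨hz0, (le_div_iff₀ hc).mpr ?_⟩
        have := (lt_div_iff₀ hz0).mp hlt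
        nlinarith
      rw [hΦdef]
      simp only [Set.indicator_of_mem hmem]
  rw [MeasureTheory.integral_const_mul] at main
  refine main.congr' ?_
  filter_upwards [self_mem_nhdsWithin] with ε (hε : 0 < ε)
  exact (key ε hε).symm
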